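/- Let x : I → ℝ³ be a unit speed twisted curve (κ₁ > 0, κ₂ ≠ 0) of constant ratio with ⟨x(s), T(s)⟩ = c²s + cb for constants c ∈ [0,1), b ∈ ℝ. Then the position vector of x is x(s) = (c²s + cb)T(s) + ((c²−1)/κ₁)N₁(s) + (κ₁·c(cs + b)/κ₂ − (c²−1)κ₁'/(κ₂κ₁²))N₂(s). -/

import Mathlib

open scoped RealInnerProductSpace

/-- A unit speed twisted curve of constant ratio with
⟨x, T⟩ = c²s + cb has position vector
x = (c²s + cb)T + ((c²−1)/κ₁)N₁ + (κ₁c(cs+b)/κ₂ − (c²−1)κ₁'/(κ₂κ₁²))N₂. -/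
theorem stmt9
    (I : Set ℝ) (x T N₁ N₂ : ℝ → EuclideanSpace ℝ (Fin 3))
    (κ₁ κ₂ κ₁' : ℝ → ℝ) (c b : ℝ)
    (hc : c ∈ Set.Ico (0 : ℝ) 1)
    (hT : ∀ s ∈ I, HasDerivAt x (T s) s)
    (hFrenet1 : ∀ s ∈ I, HasDerivAt T (κ₁ s • N₁ s) s)
    (hFrenet2 : ∀ s ∈ I, HasDerivAt N₁ (-(κ₁ s) • T s + κ₂ s • N₂ s) s)
    (hFrenet3 : ∀ s ∈ I, HasDerivAt N₂ (-(κ₂ s) • N₁ s) s)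
    (hκ₁pos : ∀ s ∈ I, 0 < κ₁ s)
    (hκ₂ne : ∀ s ∈ I, κ₂ s ≠ 0)
    (hκ₁' : ∀ s ∈ I, HasDerivAt κ₁ (κ₁' s) s)
    (hTT : ∀ s ∈ I, ⟪T s, T s⟫ = 1)
    (hN₁N₁ : ∀ s ∈ I, ⟪N₁ s, N₁ s⟫ = 1)
    (hN₂N₂ : ∀ s ∈ I, ⟪N₂ s, N₂ s⟫ = 1)
    (hTN₁ : ∀ s ∈ I, ⟪T s, N₁ s⟫ = 0)
    (hTN₂ : ∀ s ∈ I, ⟪T s, N₂ s⟫ = 0)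
    (hN₁N₂ : ∀ s ∈ I, ⟪N₁ s, N₂ s⟫ = 0)
    (hI : ∃ α β : ℝ, I = Set.Ioo α β)
    (hcr : ∀ s ∈ I, ⟪x s, T s⟫ = c ^ 2 * s + c * b) :
    ∀ s ∈ I,
      x s = (c ^ 2 * s + c * b) • T s
        + ((c ^ 2 - 1) / κ₁ s) • N₁ s
        + (κ₁ s * c * (c * s + b) / κ₂ s
            - (c ^ 2 - 1) * κ₁' s / (κ₂ s * (κ₁ s) ^ 2)) • N₂ s := by
  obtain ⟨α, β, rfl⟩ := hI
  have hnhds : ∀ s ∈ Set.Ioo α β, Set.Ioo α β ∈ nhds s := fun s hs =>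
    isOpen_Ioo.mem_nhds hs
  -- Step A: ⟪x, N₁⟫ = (c²−1)/κ₁ on I
  have hA : ∀ s ∈ Set.Ioo α β, ⟪x s, N₁ s⟫ = (c ^ 2 - 1) / κ₁ s := by
    intro s hs
    have hf : HasDerivAt (fun t => ⟪x t, T t⟫)
        (⟪x s, κ₁ s • N₁ s⟫ + ⟪T s, T s⟫) s :=
      (hT s hs).inner ℝ (hFrenet1 s hs)
    have hlin : HasDerivAt (fun t => c ^ 2 * t + c * b) (c ^ 2) s := by
      simpa using ((hasDerivAt_id s).const_mul (c ^ 2)).add_const (c * b)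
    have heq : (fun t => ⟪x t, T t⟫) =ᶠ[nhds s] fun t => c ^ 2 * t + c * b :=
      Filter.eventually_of_mem (hnhds s hs) hcr
    have huniq := (hlin.congr_of_eventuallyEq heq).unique hf
    rw [real_inner_smul_right, hTT s hs] at huniq
    have hκ := (hκ₁pos s hs).ne'
    rw [eq_div_iff hκ]
    linear_combination -huniq
  -- Step B: ⟪x, N₂⟫ = m₂
  have hB : ∀ s ∈ Set.Ioo α β, ⟪x s, N₂ s⟫ =
      κ₁ s * c * (c * s + b) / κ₂ s
        - (c ^ 2 - 1) * κ₁' s / (κ₂ s * (κ₁ s) ^ 2) := by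
    intro s hs
    have hf : HasDerivAt (fun t => ⟪x t, N₁ t⟫)
        (⟪x s, -(κ₁ s) • T s + κ₂ s • N₂ s⟫ + ⟪T s, N₁ s⟫) s :=
      (hT s hs).inner ℝ (hFrenet2 s hs)
    have hκ := (hκ₁pos s hs).ne'
    have hg : HasDerivAt (fun t => (c ^ 2 - 1) / κ₁ t)
        (-((c ^ 2 - 1) * κ₁' s) / (κ₁ s) ^ 2) s := by
      have := (hasDerivAt_const s (c ^ 2 - 1)).div (hκ₁' s hs) hκ
      exact this.congr_deriv (by ring)
    have heq : (fun t => ⟪x t, N₁ t⟫) =ᶠ[nhds s] fun t => (c ^ 2 - 1) / κ₁ t :=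
      Filter.eventually_of_mem (hnhds s hs) hA
    have huniq := (hg.congr_of_eventuallyEq heq).unique hf
    rw [inner_add_right, real_inner_smul_right, real_inner_smul_right,
      hTN₁ s hs, hcr s hs] at huniq
    have hκ₂ := hκ₂ne s hs
    have hmain : (inner ℝ (x s) (N₂ s) : ℝ)
        = (-((c ^ 2 - 1) * κ₁' s) / κ₁ s ^ 2 + κ₁ s * (c ^ 2 * s + c * b)) / κ₂ s := by
      rw [eq_div_iff hκ₂]
      linear_combination -huniq
    rw [hmain]
    field_simp
    ring
  intro s hs
  -- orthonormal basis expansion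
  set v : Fin 3 → EuclideanSpace ℝ (Fin 3) := ![T s, N₁ s, N₂ s] with hv
  have hnorm : ∀ w : EuclideanSpace ℝ (Fin 3), ⟪w, w⟫ = 1 → ‖w‖ = 1 := by
    intro w h
    rw [norm_eq_sqrt_real_inner, h, Real.sqrt_one]
  have horth : Orthonormal ℝ v := by
    constructor
    · intro i
      fin_cases i
      · exact hnorm _ (hTT s hs)
      · exact hnorm _ (hN₁N₁ s hs)
      · exact hnorm _ (hN₂N₂ s hs)
    · intro i j hij
      fin_cases i <;> fin_cases j
      · exact absurd rfl hij
      · exact hTN₁ s hs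
      · exact hTN₂ s hs
      · rw [real_inner_comm]; exact hTN₁ s hs
      · exact absurd rfl hij
      · exact hN₁N₂ s hs
      · rw [real_inner_comm]; exact hTN₂ s hs
      · rw [real_inner_comm]; exact hN₁N₂ s hs
      · exact absurd rfl hij
  have hcard : Fintype.card (Fin 3) = Module.finrank ℝ (EuclideanSpace ℝ (Fin 3)) := by
    simp
  let B : OrthonormalBasis (Fin 3) ℝ (EuclideanSpace ℝ (Fin 3)) :=
    (basisOfLinearIndependentOfCardEqFinrank horth.linearIndependent hcard).toOrthonormalBasis
      (by rwa [coe_basisOfLinearIndependentOfCardEqFinrank])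
  have hBv : ⇑B = v := by
    simp [B, Module.Basis.coe_toOrthonormalBasis, coe_basisOfLinearIndependentOfCardEqFinrank]
  have hx := B.sum_repr' (x s)
  rw [hBv] at hx
  rw [Fin.sum_univ_three] at hx
  have e0 : v 0 = T s := rfl
  have e1 : v 1 = N₁ s := rfl
  have e2 : v 2 = N₂ s := rfl
  rw [e0, e1, e2] at hx
  rw [← hx]
  rw [real_inner_comm (x s) (T s), real_inner_comm (x s) (N₁ s),
    real_inner_comm (x s) (N₂ s), hcr s hs, hA s hs, hB s hs]
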